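/- For every n, if f:V_{SG_n}→ℝ satisfies Δ_n f(x) = 0 for every non-corner vertex x of SG_n and f(u_1)=f(u_2)=f(u_3)=0, then f(x)=0 for all x ∈ V_{SG_n}. -/

import Mathlib

open scoped Classical BigOperators ENNReal

noncomputable section

/-- Points of the plane. -/
abbrev Pt : Type := ℝ × ℝ

/-- Bottom-left corner `A`. -/
def u1 : Pt := (0, 0)
/-- Top corner `C`. -/
def u2 : Pt := (1/2, Real.sqrt 3 / 2)
/-- Bottom-right corner `B`. -/
def u3 : Pt := (1, 0)

/-- The three corners of the gasket. -/
def corners : Set Pt := {u1, u2, u3}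

/-- Vertex set of the `n`-th Sierpinski gasket approximation graph `SG_n`. -/
def V : ℕ → Set Pt
  | 0 => {u1, u2, u3}
  | n + 1 =>
      (fun p : Pt => (2:ℝ)⁻¹ • p) ''
        (V n ∪ (fun p => u2 + p) '' V n ∪ (fun p => u3 + p) '' V n)

/-- Edge set (as ordered pairs) of `SG_n`. -/
def Ed : ℕ → Set (Pt × Pt)
  | 0 => {(u1, u2), (u2, u3), (u1, u3)}
  | n + 1 =>
      (fun q : Pt × Pt => ((2:ℝ)⁻¹ • q.1, (2:ℝ)⁻¹ • q.2)) ''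
        (Ed n ∪ (fun q : Pt × Pt => (u2 + q.1, u2 + q.2)) '' Ed n ∪
          (fun q : Pt × Pt => (u3 + q.1, u3 + q.2)) '' Ed n)

/-- The `n`-th Sierpinski gasket approximation graph, as a simple graph on the plane
(vertices outside `V n` are isolated). -/
def SG (n : ℕ) : SimpleGraph Pt where
  Adj x y := ((x, y) ∈ Ed n ∨ (y, x) ∈ Ed n) ∧ x ≠ y
  symm := ⟨fun x y h => ⟨h.1.symm, h.2.symm⟩⟩
  loopless := ⟨fun _ h => h.2 rfl⟩

/-- Graph distance on `SG_n`. -/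
def gdist (n : ℕ) (x y : Pt) : ℕ := (SG n).dist x y

/-- `d_n x`: graph distance from `x` to the nearest corner of `SG_n`. -/
def dcorner (n : ℕ) (x : Pt) : ℕ :=
  min (gdist n x u1) (min (gdist n x u2) (gdist n x u3))

/-- Graph Laplacian of `SG_n` at a (non-corner, degree 4) vertex `x`:
`Δ_n f x = 4 f x - ∑_{y ∼ x} f y`. -/
def lap (n : ℕ) (f : Pt → ℝ) (x : Pt) : ℝ :=
  4 * f x - ∑ᶠ (y : Pt) (_ : (SG n).Adj x y), f y

/-- `g : Pt → Pt → ℝ` is the Green function of `SG_n` (stopped at the corners):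
it vanishes whenever one argument is a corner, and for every non-corner vertex `y`
the function `x ↦ g x y` has Laplacian `δ_y` at every non-corner vertex `x`. -/
def IsGreen (n : ℕ) (g : Pt → Pt → ℝ) : Prop :=
  (∀ x y : Pt, x ∈ corners ∨ y ∈ corners → g x y = 0) ∧
    ∀ y ∈ V n, y ∉ corners → ∀ x ∈ V n, x ∉ corners →
      lap n (fun z => g z y) x = if x = y then 1 else 0

/-- `h_n x = ∑_{y ∈ V_{SG_n}} g_n(x,y)`. -/
def hfun (n : ℕ) (g : Pt → Pt → ℝ) (x : Pt) : ℝ := ∑ᶠ y ∈ V n, g x y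

/-- Green convolution `(g_n * σ)(x) = ∑_{y ∈ V_{SG_n}} g_n(x,y) σ(y)`. -/
def conv (n : ℕ) (g : Pt → Pt → ℝ) (σ : Pt → ℕ) (x : Pt) : ℝ :=
  ∑ᶠ y ∈ V n, g x y * (σ y : ℝ)

/-- Midpoint of side `AB`. -/
def mAB : Pt := (2:ℝ)⁻¹ • (u1 + u3)
/-- Midpoint of side `BC`. -/
def mBC : Pt := (2:ℝ)⁻¹ • (u3 + u2)
/-- Midpoint of side `CA`. -/
def mCA : Pt := (2:ℝ)⁻¹ • (u2 + u1)

/-- The recursively defined sandpile configurations `M_n(a,b,c)` on `SG_n`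
(value `0` off the vertex set, and junk at level `0`). -/
def M : ℕ → ℕ → ℕ → ℕ → Pt → ℕ
  | 0, _, _, _, _ => 0
  | 1, a, b, c, x =>
      if x = u1 then a else if x = u3 then b else if x = u2 then c
      else if x = mAB then 3 else if x = mBC then 2 else if x = mCA then 3 else 0
  | n + 2, a, b, c, x =>
      if x = u1 then a else if x = u3 then b else if x = u2 then c
      else if x = mAB then 3 else if x = mBC then 2 else if x = mCA then 3
      else if (2:ℝ) • x ∈ V (n+1) then M (n+1) a 3 3 ((2:ℝ) • x)
      else if (2:ℝ) • x - u3 ∈ V (n+1) then M (n+1) 3 b 2 ((2:ℝ) • x - u3)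
      else if (2:ℝ) • x - u2 ∈ V (n+1) then M (n+1) 3 2 c ((2:ℝ) • x - u2)
      else 0

/-- Centroid of the three corners. -/
def ctr : Pt := (3:ℝ)⁻¹ • (u1 + u2 + u3)

/-- Rotation of the plane by 120° counterclockwise about the centroid. -/
def rotccw (x : Pt) : Pt :=
  (ctr.1 - (x.1 - ctr.1) / 2 - Real.sqrt 3 / 2 * (x.2 - ctr.2),
   ctr.2 + Real.sqrt 3 / 2 * (x.1 - ctr.1) - (x.2 - ctr.2) / 2)

/-- Rotation of the plane by 120° clockwise about the centroid. -/
def rotcw (x : Pt) : Pt :=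
  (ctr.1 - (x.1 - ctr.1) / 2 + Real.sqrt 3 / 2 * (x.2 - ctr.2),
   ctr.2 - Real.sqrt 3 / 2 * (x.1 - ctr.1) - (x.2 - ctr.2) / 2)

/-- The sandpile identity `id_n` on `SG_n` for `n ≥ 2` (junk `0` for `n ≤ 1` and off the
vertex set): value `2` at the corners and side midpoints, the configuration `M_{n-1}(2,2,2)`
rescaled on the bottom-left copy, its clockwise 120° rotation on the top copy, and its
counterclockwise 120° rotation on the bottom-right copy. -/
def sandId : ℕ → Pt → ℕ
  | 0, _ => 0
  | 1, _ => 0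
  | m + 2, x =>
      if x = u1 ∨ x = u2 ∨ x = u3 ∨ x = mAB ∨ x = mBC ∨ x = mCA then 2
      else if (2:ℝ) • x ∈ V (m+1) then M (m+1) 2 2 2 ((2:ℝ) • x)
      else if (2:ℝ) • x - u2 ∈ V (m+1) then M (m+1) 2 2 2 (rotccw ((2:ℝ) • x - u2))
      else if (2:ℝ) • x - u3 ∈ V (m+1) then M (m+1) 2 2 2 (rotcw ((2:ℝ) • x - u3))
      else 0

/-- `V_* = ⋃_n V_{SG_n}`. -/
def Vstar : Set Pt := ⋃ n, V n

/-- The Sierpinski gasket: the closure of `V_*` in the plane. -/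
def SGset : Set Pt := closure Vstar

/-- Euclidean distance on the plane. -/
def eud (x y : Pt) : ℝ := Real.sqrt ((x.1 - y.1) ^ 2 + (x.2 - y.2) ^ 2)

/-- The point of `V n` nearest to `x` in Euclidean distance, ties resolved by taking the
rightmost (largest first coordinate) minimizer. -/
def nearest (n : ℕ) (x : Pt) : Pt :=
  if h : ∃ y ∈ V n, (∀ z ∈ V n, eud x y ≤ eud x z) ∧
      ∀ z ∈ V n, eud x z = eud x y → z.1 ≤ y.1
  then h.choose else x

/-- Piecewise constant continuation `f^▲` of a function on `V n` to the gasket. -/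
def ext (n : ℕ) (f : Pt → ℝ) (x : Pt) : ℝ := f (nearest n x)

/-- Arc length (total variation w.r.t. the Euclidean distance) of a curve
`γ : [0,1] → ℝ²`. -/
def pathLen (γ : ℝ → Pt) : ℝ≥0∞ :=
  ⨆ p : ℕ × {u : ℕ → ℝ // Monotone u ∧ ∀ i, u i ∈ Set.Icc (0:ℝ) 1},
    ∑ i ∈ Finset.range p.1, ENNReal.ofReal (eud (γ (p.2.1 (i + 1))) (γ (p.2.1 i)))

/-- Intrinsic (shortest-path) distance between `x` and `y` through the gasket. -/
def intrinsicD (x y : Pt) : ℝ≥0∞ :=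
  ⨅ (γ : ℝ → Pt) (_ : ContinuousOn γ (Set.Icc 0 1)) (_ : γ 0 = x) (_ : γ 1 = y)
    (_ : Set.MapsTo γ (Set.Icc 0 1) SGset), pathLen γ

/-- `d(x)`: intrinsic shortest-path distance in the gasket from `x` to the nearest corner. -/
def dSG (x : Pt) : ℝ :=
  (min (intrinsicD x u1) (min (intrinsicD x u2) (intrinsicD x u3))).toReal

section Aux

lemma half_double (x : Pt) : (2:ℝ)⁻¹ • ((2:ℝ) • x) = x := by
  rw [smul_smul]; norm_num

lemma double_half (x : Pt) : (2:ℝ) • ((2:ℝ)⁻¹ • x) = x := by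
  rw [smul_smul]; norm_num

lemma mem_V_succ {n : ℕ} {x : Pt} :
    x ∈ V (n+1) ↔ (2:ℝ) • x ∈ V n ∨ (2:ℝ) • x - u2 ∈ V n ∨ (2:ℝ) • x - u3 ∈ V n := by
  constructor
  · rintro ⟨p, hp, rfl⟩
    rw [double_half]
    rcases hp with (hp | ⟨q, hq, rfl⟩) | ⟨q, hq, rfl⟩
    · exact Or.inl hp
    · exact Or.inr (Or.inl (by simpa using hq))
    · exact Or.inr (Or.inr (by simpa using hq))
  · rintro (h | h | h)
    · exact ⟨(2:ℝ) • x, Or.inl (Or.inl h), half_double x⟩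
    · exact ⟨(2:ℝ) • x, Or.inl (Or.inr ⟨_, h, by show _ + _ = _; rw [add_comm, sub_add_cancel]⟩), half_double x⟩
    · exact ⟨(2:ℝ) • x, Or.inr ⟨_, h, by show _ + _ = _; rw [add_comm, sub_add_cancel]⟩, half_double x⟩

end Aux
section Aux2

lemma mem_Ed_succ {n : ℕ} {a b : Pt} :
    (a, b) ∈ Ed (n+1) ↔ ((2:ℝ) • a, (2:ℝ) • b) ∈ Ed n ∨
      ((2:ℝ) • a - u2, (2:ℝ) • b - u2) ∈ Ed n ∨
      ((2:ℝ) • a - u3, (2:ℝ) • b - u3) ∈ Ed n := by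
  constructor
  · rintro ⟨⟨p, q⟩, hp, hpq⟩
    have h1 : a = (2:ℝ)⁻¹ • p := congrArg Prod.fst hpq.symm
    have h2 : b = (2:ℝ)⁻¹ • q := congrArg Prod.snd hpq.symm
    subst h1; subst h2
    rw [double_half, double_half]
    rcases hp with (hp | ⟨r, hr, hrq⟩) | ⟨r, hr, hrq⟩
    · exact Or.inl hp
    · refine Or.inr (Or.inl ?_)
      have e1 : p = u2 + r.1 := congrArg Prod.fst hrq.symm
      have e2 : q = u2 + r.2 := congrArg Prod.snd hrq.symm
      simpa [e1, e2, add_sub_cancel_left] using hr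
    · refine Or.inr (Or.inr ?_)
      have e1 : p = u3 + r.1 := congrArg Prod.fst hrq.symm
      have e2 : q = u3 + r.2 := congrArg Prod.snd hrq.symm
      simpa [e1, e2, add_sub_cancel_left] using hr
  · rintro (h | h | h)
    · exact ⟨((2:ℝ) • a, (2:ℝ) • b), Or.inl (Or.inl h), by simp [half_double]⟩
    · refine ⟨((2:ℝ) • a, (2:ℝ) • b), Or.inl (Or.inr ⟨_, h, ?_⟩), by simp [half_double]⟩
      show (u2 + _, u2 + _) = _
      rw [add_comm u2, sub_add_cancel, add_comm u2, sub_add_cancel]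
    · refine ⟨((2:ℝ) • a, (2:ℝ) • b), Or.inr ⟨_, h, ?_⟩, by simp [half_double]⟩
      show (u3 + _, u3 + _) = _
      rw [add_comm u3, sub_add_cancel, add_comm u3, sub_add_cancel]

lemma Ed_sub : ∀ n, Ed n ⊆ (V n) ×ˢ (V n) := by
  intro n
  induction n with
  | zero =>
    rintro ⟨a, b⟩ h
    simp only [Ed, Set.mem_insert_iff, Set.mem_singleton_iff, Prod.mk.injEq] at h
    rcases h with ⟨rfl, rfl⟩ | ⟨rfl, rfl⟩ | ⟨rfl, rfl⟩ <;>
      simp [V, Set.mem_insert_iff]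
  | succ n ih =>
    rintro ⟨a, b⟩ h
    rw [mem_Ed_succ] at h
    rw [Set.mem_prod, mem_V_succ, mem_V_succ]
    rcases h with h | h | h
    · exact ⟨Or.inl (ih h).1, Or.inl (ih h).2⟩
    · exact ⟨Or.inr (Or.inl (ih h).1), Or.inr (Or.inl (ih h).2)⟩
    · exact ⟨Or.inr (Or.inr (ih h).1), Or.inr (Or.inr (ih h).2)⟩

lemma V_finite : ∀ n, (V n).Finite := by
  intro n
  induction n with
  | zero => exact (Set.finite_singleton u3).insert u2 |>.insert u1
  | succ n ih => exact (((ih.union (ih.image _)).union (ih.image _)).image _)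

lemma Ed_finite : ∀ n, (Ed n).Finite := by
  intro n
  induction n with
  | zero => exact (Set.finite_singleton _).insert _ |>.insert _
  | succ n ih => exact (((ih.union (ih.image _)).union (ih.image _)).image _)

lemma corners_mem_V : ∀ n, u1 ∈ V n ∧ u2 ∈ V n ∧ u3 ∈ V n := by
  intro n
  induction n with
  | zero => refine ⟨Or.inl rfl, Or.inr (Or.inl rfl), Or.inr (Or.inr rfl)⟩
  | succ n ih =>
    refine ⟨mem_V_succ.2 (Or.inl ?_), mem_V_succ.2 (Or.inr (Or.inl ?_)),
      mem_V_succ.2 (Or.inr (Or.inr ?_))⟩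
    · have : (2:ℝ) • (u1 : Pt) = u1 := by simp [u1, Prod.smul_mk]
      rw [this]; exact ih.1
    · have : (2:ℝ) • (u2 : Pt) - u2 = u2 := by
        rw [two_smul]; rw [add_sub_cancel_right]
      rw [this]; exact ih.2.1
    · have : (2:ℝ) • (u3 : Pt) - u3 = u3 := by
        rw [two_smul]; rw [add_sub_cancel_right]
      rw [this]; exact ih.2.2

end Aux2
section Aux3

lemma sqrt3_pos : (0:ℝ) < Real.sqrt 3 := Real.sqrt_pos.mpr (by norm_num)

lemma sqrt3_sq : Real.sqrt 3 ^ 2 = 3 := Real.sq_sqrt (by norm_num)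

lemma smul2_fst (p : Pt) : ((2:ℝ) • p).1 = 2 * p.1 := rfl
lemma smul2_snd (p : Pt) : ((2:ℝ) • p).2 = 2 * p.2 := rfl

lemma V_triangle : ∀ n, ∀ p ∈ V n,
    0 ≤ p.2 ∧ p.2 ≤ Real.sqrt 3 * p.1 ∧ p.2 ≤ Real.sqrt 3 * (1 - p.1) := by
  intro n
  have hs0 : (0:ℝ) ≤ Real.sqrt 3 := sqrt3_pos.le
  induction n with
  | zero =>
    rintro p (rfl | rfl | rfl) <;>
      simp only [u1, u2, u3] <;>
      refine ⟨by positivity, ?_, ?_⟩ <;> nlinarith [hs0]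
  | succ n ih =>
    intro p hp
    rcases mem_V_succ.1 hp with h | h | h
    · obtain ⟨h0, h1, h2⟩ := ih _ h
      simp only [smul2_fst, smul2_snd] at h0 h1 h2
      refine ⟨by linarith, by linarith, by nlinarith⟩
    · obtain ⟨h0, h1, h2⟩ := ih _ h
      have e1 : ((2:ℝ) • p - u2).1 = 2 * p.1 - 1/2 := rfl
      have e2 : ((2:ℝ) • p - u2).2 = 2 * p.2 - Real.sqrt 3 / 2 := rfl
      simp only [e1, e2] at h0 h1 h2
      refine ⟨by linarith, by nlinarith, by nlinarith⟩
    · obtain ⟨h0, h1, h2⟩ := ih _ h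
      have e1 : ((2:ℝ) • p - u3).1 = 2 * p.1 - 1 := rfl
      have e2 : ((2:ℝ) • p - u3).2 = 2 * p.2 - 0 := rfl
      simp only [e1, e2] at h0 h1 h2
      refine ⟨by linarith, by nlinarith, by nlinarith⟩

lemma V_box {n : ℕ} {p : Pt} (hp : p ∈ V n) :
    0 ≤ p.1 ∧ p.1 ≤ 1 ∧ 0 ≤ p.2 ∧ p.2 ≤ Real.sqrt 3 / 2 := by
  obtain ⟨h0, h1, h2⟩ := V_triangle n p hp
  have hs := sqrt3_pos
  refine ⟨by nlinarith, by nlinarith, h0, by nlinarith⟩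

end Aux3
section Aux4

lemma not_mem_V {n : ℕ} {p : Pt}
    (h : p.1 < 0 ∨ 1 < p.1 ∨ p.2 < 0 ∨ Real.sqrt 3 / 2 < p.2) : p ∉ V n := by
  intro hp
  obtain ⟨b1, b2, b3, b4⟩ := V_box hp
  rcases h with h | h | h | h <;> linarith

lemma overlap2 {n : ℕ} {p q : Pt} (hp : p ∈ V n) (hq : q ∈ V n) (h : p = u2 + q) :
    p = u2 ∧ q = u1 := by
  have hs := sqrt3_pos
  obtain ⟨p0, p1, p2⟩ := V_triangle n p hp
  obtain ⟨q0, q1, q2⟩ := V_triangle n q hq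
  have e1 : p.1 = 1/2 + q.1 := congrArg Prod.fst h
  have e2 : p.2 = Real.sqrt 3 / 2 + q.2 := congrArg Prod.snd h
  have hq2 : q.2 = 0 := by linarith
  have hp2 : p.2 = Real.sqrt 3 / 2 := by linarith
  have hpa : p.1 ≤ 1/2 := by nlinarith
  have hpb : 1/2 ≤ p.1 := by nlinarith
  constructor
  · exact Prod.ext (by simp [u2]; linarith) (by simp [u2]; linarith)
  · exact Prod.ext (by simp [u1]; linarith) (by simp [u1]; linarith)

lemma overlap3 {n : ℕ} {p q : Pt} (hp : p ∈ V n) (hq : q ∈ V n) (h : p = u3 + q) :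
    p = u3 ∧ q = u1 := by
  have hs := sqrt3_pos
  obtain ⟨p1, p2, p0, _⟩ := V_box hp
  obtain ⟨q1, q2, q0, _⟩ := V_box hq
  obtain ⟨_, pq1, _⟩ := V_triangle n p hp
  obtain ⟨_, qq1, _⟩ := V_triangle n q hq
  have e1 : p.1 = 1 + q.1 := congrArg Prod.fst h
  have e2 : p.2 = 0 + q.2 := congrArg Prod.snd h
  have hq1 : q.1 = 0 := by linarith
  have hq2 : q.2 = 0 := by nlinarith
  constructor
  · exact Prod.ext (by simp [u3]; linarith) (by simp [u3]; linarith)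
  · exact Prod.ext (by simp [u1]; linarith) (by simp [u1]; linarith)

lemma overlap23 {n : ℕ} {p q : Pt} (hp : p ∈ V n) (hq : q ∈ V n) (h : u2 + p = u3 + q) :
    p = u3 ∧ q = u2 := by
  have hs := sqrt3_pos
  obtain ⟨p1', _, p0, _⟩ := V_box hp
  obtain ⟨_, _, _, q4⟩ := V_box hq
  obtain ⟨_, pq1, pq2⟩ := V_triangle n p hp
  obtain ⟨_, qq1, qq2⟩ := V_triangle n q hq
  have e1 : (1:ℝ)/2 + p.1 = 1 + q.1 := congrArg Prod.fst h
  have e2 : Real.sqrt 3 / 2 + p.2 = 0 + q.2 := congrArg Prod.snd h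
  have hp2 : p.2 = 0 := by linarith
  have hq2 : q.2 = Real.sqrt 3 / 2 := by linarith
  have hqa : q.1 ≤ 1/2 := by nlinarith
  have hqb : 1/2 ≤ q.1 := by nlinarith
  constructor
  · exact Prod.ext (by simp [u3]; linarith) (by simp [u3]; linarith)
  · exact Prod.ext (by simp [u2]; linarith) (by simp [u2]; linarith)

lemma u12 : u1 ≠ u2 := by
  intro h
  have := congrArg Prod.snd h
  simp only [u1, u2] at this
  linarith [sqrt3_pos]

lemma u13 : u1 ≠ u3 := by
  intro h
  have := congrArg Prod.fst h
  simp [u1, u3] at this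

lemma u23 : u2 ≠ u3 := by
  intro h
  have := congrArg Prod.snd h
  simp only [u2, u3] at this
  linarith [sqrt3_pos]

end Aux4
section Aux5

lemma sub_fst (p q : Pt) : (p - q).1 = p.1 - q.1 := rfl
lemma sub_snd (p q : Pt) : (p - q).2 = p.2 - q.2 := rfl
lemma add_fst (p q : Pt) : (p + q).1 = p.1 + q.1 := rfl
lemma add_snd (p q : Pt) : (p + q).2 = p.2 + q.2 := rfl
lemma u1_fst : (u1:Pt).1 = 0 := rfl
lemma u1_snd : (u1:Pt).2 = 0 := rfl
lemma u2_fst : (u2:Pt).1 = 1/2 := rfl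
lemma u2_snd : (u2:Pt).2 = Real.sqrt 3 / 2 := rfl
lemma u3_fst : (u3:Pt).1 = 1 := rfl
lemma u3_snd : (u3:Pt).2 = 0 := rfl

/-- The neighbour set. -/
def Nb (n : ℕ) (x : Pt) : Set Pt := {y | (SG n).Adj x y}

lemma Nb_finite (n : ℕ) (x : Pt) : (Nb n x).Finite := by
  apply Set.Finite.subset ((Ed_finite n).image Prod.snd |>.union ((Ed_finite n).image Prod.fst))
  rintro y ⟨(h | h), -⟩
  · exact Or.inl ⟨(x, y), h, rfl⟩
  · exact Or.inr ⟨(y, x), h, rfl⟩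

lemma Nb_subset_V {n : ℕ} {x : Pt} : Nb n x ⊆ V n := by
  rintro y ⟨(h | h), -⟩
  · exact (Ed_sub n h).2
  · exact (Ed_sub n h).1

lemma mem_V_of_adj {n : ℕ} {x y : Pt} (h : (SG n).Adj x y) : x ∈ V n := by
  rcases h.1 with h' | h'
  · exact (Ed_sub n h').1
  · exact (Ed_sub n h').2

lemma Nb_empty {n : ℕ} {x : Pt} (hx : x ∉ V n) : Nb n x = ∅ := by
  ext y
  simp only [Set.mem_empty_iff_false, iff_false]
  intro hy
  exact hx (mem_V_of_adj hy)

lemma double_inj : Function.Injective (fun y : Pt => (2:ℝ) • y) := by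
  intro a b h
  have := congrArg (fun p : Pt => (2:ℝ)⁻¹ • p) h
  simpa [half_double] using this

lemma adj_succ_iff {n : ℕ} {x y : Pt} :
    (SG (n+1)).Adj x y ↔ (SG n).Adj ((2:ℝ) • x) ((2:ℝ) • y) ∨
      (SG n).Adj ((2:ℝ) • x - u2) ((2:ℝ) • y - u2) ∨
      (SG n).Adj ((2:ℝ) • x - u3) ((2:ℝ) • y - u3) := by
  have hne : x ≠ y ↔ (2:ℝ) • x ≠ (2:ℝ) • y := by
    constructor
    · intro h h'; exact h (double_inj h')
    · intro h h'; exact h (by rw [h'])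
  constructor
  · rintro ⟨(h | h), hxy⟩
    · rcases mem_Ed_succ.1 h with h' | h' | h'
      · exact Or.inl ⟨Or.inl h', hne.1 hxy⟩
      · exact Or.inr (Or.inl ⟨Or.inl h', fun e => hxy (double_inj (by
          have := congrArg (fun z => z + u2) e
          simpa [sub_add_cancel] using this))⟩)
      · exact Or.inr (Or.inr ⟨Or.inl h', fun e => hxy (double_inj (by
          have := congrArg (fun z => z + u3) e
          simpa [sub_add_cancel] using this))⟩)
    · rcases mem_Ed_succ.1 h with h' | h' | h'
      · exact Or.inl ⟨Or.inr h', hne.1 hxy⟩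
      · exact Or.inr (Or.inl ⟨Or.inr h', fun e => hxy (double_inj (by
          have := congrArg (fun z => z + u2) e
          simpa [sub_add_cancel] using this))⟩)
      · exact Or.inr (Or.inr ⟨Or.inr h', fun e => hxy (double_inj (by
          have := congrArg (fun z => z + u3) e
          simpa [sub_add_cancel] using this))⟩)
  · rintro (⟨(h | h), hxy⟩ | ⟨(h | h), hxy⟩ | ⟨(h | h), hxy⟩)
    · exact ⟨Or.inl (mem_Ed_succ.2 (Or.inl h)), fun e => hxy (by rw [e])⟩
    · exact ⟨Or.inr (mem_Ed_succ.2 (Or.inl h)), fun e => hxy (by rw [e])⟩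
    · exact ⟨Or.inl (mem_Ed_succ.2 (Or.inr (Or.inl h))), fun e => hxy (by rw [e])⟩
    · exact ⟨Or.inr (mem_Ed_succ.2 (Or.inr (Or.inl h))), fun e => hxy (by rw [e])⟩
    · exact ⟨Or.inl (mem_Ed_succ.2 (Or.inr (Or.inr h))), fun e => hxy (by rw [e])⟩
    · exact ⟨Or.inr (mem_Ed_succ.2 (Or.inr (Or.inr h))), fun e => hxy (by rw [e])⟩

end Aux5
section Aux6

lemma half_inj : Function.Injective (fun y : Pt => (2:ℝ)⁻¹ • y) := by
  intro a b h
  have := congrArg (fun p : Pt => (2:ℝ) • p) h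
  simpa [double_half] using this

lemma half_add_inj (t : Pt) : Function.Injective (fun y : Pt => (2:ℝ)⁻¹ • (t + y)) := by
  intro a b h
  have h2 := half_inj h
  exact add_left_cancel h2

lemma Nb_succ (n : ℕ) (x : Pt) : Nb (n+1) x =
    (fun y : Pt => (2:ℝ)⁻¹ • y) '' Nb n ((2:ℝ) • x) ∪
    (fun y : Pt => (2:ℝ)⁻¹ • (u2 + y)) '' Nb n ((2:ℝ) • x - u2) ∪
    (fun y : Pt => (2:ℝ)⁻¹ • (u3 + y)) '' Nb n ((2:ℝ) • x - u3) := by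
  ext y
  simp only [Nb, Set.mem_setOf_eq, Set.mem_union, Set.mem_image]
  rw [adj_succ_iff]
  constructor
  · rintro (h | h | h)
    · exact Or.inl (Or.inl ⟨_, h, half_double y⟩)
    · refine Or.inl (Or.inr ⟨_, h, ?_⟩)
      rw [add_comm, sub_add_cancel, half_double]
    · refine Or.inr ⟨_, h, ?_⟩
      rw [add_comm, sub_add_cancel, half_double]
  · rintro ((⟨z, hz, rfl⟩ | ⟨z, hz, rfl⟩) | ⟨z, hz, rfl⟩)
    · rw [double_half]; exact Or.inl hz
    · rw [double_half, add_sub_cancel_left]; exact Or.inr (Or.inl hz)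
    · rw [double_half, add_sub_cancel_left]; exact Or.inr (Or.inr hz)

lemma ncard_triple (n : ℕ) (x : Pt) :
    (Nb (n+1) x).ncard ≤ (Nb n ((2:ℝ) • x)).ncard + (Nb n ((2:ℝ) • x - u2)).ncard +
      (Nb n ((2:ℝ) • x - u3)).ncard := by
  rw [Nb_succ]
  refine le_trans (Set.ncard_union_le _ _) ?_
  refine le_trans (Nat.add_le_add_right (Set.ncard_union_le _ _) _) ?_
  rw [Set.ncard_image_of_injective _ half_inj,
    Set.ncard_image_of_injective _ (half_add_inj u2),
    Set.ncard_image_of_injective _ (half_add_inj u3)]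

lemma Nb0_u1 : Nb 0 u1 ⊆ {u2, u3} := by
  rintro y ⟨(h | h), -⟩ <;>
  · simp only [Ed, Set.mem_insert_iff, Set.mem_singleton_iff, Prod.mk.injEq] at h
    rcases h with ⟨h1, h2⟩ | ⟨h1, h2⟩ | ⟨h1, h2⟩ <;>
      simp_all [u12, u13, u23, u12.symm, u13.symm, u23.symm]

lemma Nb0_u2 : Nb 0 u2 ⊆ {u1, u3} := by
  rintro y ⟨(h | h), -⟩ <;>
  · simp only [Ed, Set.mem_insert_iff, Set.mem_singleton_iff, Prod.mk.injEq] at h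
    rcases h with ⟨h1, h2⟩ | ⟨h1, h2⟩ | ⟨h1, h2⟩ <;>
      simp_all [u12, u13, u23, u12.symm, u13.symm, u23.symm]

lemma Nb0_u3 : Nb 0 u3 ⊆ {u1, u2} := by
  rintro y ⟨(h | h), -⟩ <;>
  · simp only [Ed, Set.mem_insert_iff, Set.mem_singleton_iff, Prod.mk.injEq] at h
    rcases h with ⟨h1, h2⟩ | ⟨h1, h2⟩ | ⟨h1, h2⟩ <;>
      simp_all [u12, u13, u23, u12.symm, u13.symm, u23.symm]

lemma Nb0_all (x : Pt) : Nb 0 x ⊆ {u1, u2, u3} := by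
  rintro y ⟨(h | h), -⟩ <;>
  · simp only [Ed, Set.mem_insert_iff, Set.mem_singleton_iff, Prod.mk.injEq] at h
    rcases h with ⟨h1, h2⟩ | ⟨h1, h2⟩ | ⟨h1, h2⟩ <;> simp_all

lemma ncard_pair_le {y z : Pt} {s : Set Pt} (h : s ⊆ {y, z}) : s.ncard ≤ 2 := by
  calc s.ncard ≤ ({y, z} : Set Pt).ncard :=
        Set.ncard_le_ncard h ((Set.finite_singleton z).insert y)
    _ ≤ 2 := by
        calc (insert y {z} : Set Pt).ncard ≤ ({z} : Set Pt).ncard + 1 :=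
              Set.ncard_insert_le _ _
          _ ≤ 2 := by rw [Set.ncard_singleton]

end Aux6
section Aux7

lemma rel_pq (x : Pt) : (2:ℝ) • x = u2 + ((2:ℝ) • x - u2) := by
  rw [add_comm, sub_add_cancel]
lemma rel_pr (x : Pt) : (2:ℝ) • x = u3 + ((2:ℝ) • x - u3) := by
  rw [add_comm, sub_add_cancel]
lemma rel_qr (x : Pt) : u2 + ((2:ℝ) • x - u2) = u3 + ((2:ℝ) • x - u3) := by
  rw [← rel_pq, ← rel_pr]

lemma deg_bound : ∀ n : ℕ, (∀ x : Pt, (Nb n x).ncard ≤ 4) ∧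
    (Nb n u1).ncard ≤ 2 ∧ (Nb n u2).ncard ≤ 2 ∧ (Nb n u3).ncard ≤ 2 := by
  intro n
  induction n with
  | zero =>
    refine ⟨fun x => ?_, ncard_pair_le Nb0_u1, ncard_pair_le Nb0_u2, ncard_pair_le Nb0_u3⟩
    have h1 : (Nb 0 x).ncard ≤ ({u1, u2, u3} : Set Pt).ncard :=
      Set.ncard_le_ncard (Nb0_all x) (((Set.finite_singleton u3).insert u2).insert u1)
    have h2 : ({u1, u2, u3} : Set Pt).ncard ≤ ({u2, u3} : Set Pt).ncard + 1 :=
      Set.ncard_insert_le _ _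
    have h3 : ({u2, u3} : Set Pt).ncard ≤ ({u3} : Set Pt).ncard + 1 :=
      Set.ncard_insert_le _ _
    rw [Set.ncard_singleton] at h3
    omega
  | succ n ih =>
    obtain ⟨ih4, ihc1, ihc2, ihc3⟩ := ih
    have hs := sqrt3_pos
    have key : ∀ x : Pt, (Nb (n+1) x).ncard ≤ 4 := by
      intro x
      refine le_trans (ncard_triple n x) ?_
      by_cases hp : (2:ℝ) • x ∈ V n
      · by_cases hq : (2:ℝ) • x - u2 ∈ V n
        · obtain ⟨hpu, hqu⟩ := overlap2 hp hq (rel_pq x)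
          have hr : (2:ℝ) • x - u3 ∉ V n := by
            apply not_mem_V
            refine Or.inl ?_
            have : ((2:ℝ) • x - u3).1 = u2.1 - u3.1 := by rw [sub_fst, hpu]
            rw [this, u2_fst, u3_fst]; norm_num
          rw [Nb_empty hr, Set.ncard_empty]
          have b1 : (Nb n ((2:ℝ) • x)).ncard ≤ 2 := by rw [hpu]; exact ihc2
          have b2 : (Nb n ((2:ℝ) • x - u2)).ncard ≤ 2 := by rw [hqu]; exact ihc1
          omega
        · by_cases hr : (2:ℝ) • x - u3 ∈ V n
          · obtain ⟨hpu, hru⟩ := overlap3 hp hr (rel_pr x)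
            rw [Nb_empty hq, Set.ncard_empty]
            have b1 : (Nb n ((2:ℝ) • x)).ncard ≤ 2 := by rw [hpu]; exact ihc3
            have b2 : (Nb n ((2:ℝ) • x - u3)).ncard ≤ 2 := by rw [hru]; exact ihc1
            omega
          · rw [Nb_empty hq, Nb_empty hr, Set.ncard_empty]
            have := ih4 ((2:ℝ) • x)
            omega
      · by_cases hq : (2:ℝ) • x - u2 ∈ V n
        · by_cases hr : (2:ℝ) • x - u3 ∈ V n
          · obtain ⟨hqu, hru⟩ := overlap23 hq hr (rel_qr x)
            rw [Nb_empty hp, Set.ncard_empty]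
            have b1 : (Nb n ((2:ℝ) • x - u2)).ncard ≤ 2 := by rw [hqu]; exact ihc3
            have b2 : (Nb n ((2:ℝ) • x - u3)).ncard ≤ 2 := by rw [hru]; exact ihc2
            omega
          · rw [Nb_empty hp, Nb_empty hr, Set.ncard_empty]
            have := ih4 ((2:ℝ) • x - u2)
            omega
        · rw [Nb_empty hp, Nb_empty hq, Set.ncard_empty]
          have := ih4 ((2:ℝ) • x - u3)
          omega
    refine ⟨key, ?_, ?_, ?_⟩
    · refine le_trans (ncard_triple n u1) ?_
      have e : (2:ℝ) • (u1 : Pt) = u1 := by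
        apply Prod.ext <;> simp [smul2_fst, smul2_snd, u1_fst, u1_snd]
      have hq : (2:ℝ) • (u1:Pt) - u2 ∉ V n := by
        apply not_mem_V
        refine Or.inr (Or.inr (Or.inl ?_))
        rw [sub_snd, smul2_snd, u1_snd, u2_snd]; linarith
      have hr : (2:ℝ) • (u1:Pt) - u3 ∉ V n := by
        apply not_mem_V
        refine Or.inl ?_
        rw [sub_fst, smul2_fst, u1_fst, u3_fst]; norm_num
      rw [Nb_empty hq, Nb_empty hr, Set.ncard_empty, e]
      omega
    · refine le_trans (ncard_triple n u2) ?_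
      have e : (2:ℝ) • (u2 : Pt) - u2 = u2 := by rw [two_smul, add_sub_cancel_right]
      have hp : (2:ℝ) • (u2:Pt) ∉ V n := by
        apply not_mem_V
        refine Or.inr (Or.inr (Or.inr ?_))
        rw [smul2_snd, u2_snd]; linarith
      have hr : (2:ℝ) • (u2:Pt) - u3 ∉ V n := by
        apply not_mem_V
        refine Or.inr (Or.inr (Or.inr ?_))
        rw [sub_snd, smul2_snd, u2_snd, u3_snd]; linarith
      rw [Nb_empty hp, Nb_empty hr, Set.ncard_empty, e]
      omega
    · refine le_trans (ncard_triple n u3) ?_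
      have e : (2:ℝ) • (u3 : Pt) - u3 = u3 := by rw [two_smul, add_sub_cancel_right]
      have hp : (2:ℝ) • (u3:Pt) ∉ V n := by
        apply not_mem_V
        refine Or.inr (Or.inl ?_)
        rw [smul2_fst, u3_fst]; norm_num
      have hq : (2:ℝ) • (u3:Pt) - u2 ∉ V n := by
        apply not_mem_V
        refine Or.inr (Or.inr (Or.inl ?_))
        rw [sub_snd, smul2_snd, u3_snd, u2_snd]; linarith
      rw [Nb_empty hp, Nb_empty hq, Set.ncard_empty, e]
      omega

end Aux7
section Aux8

lemma u1_zero : (u1 : Pt) = 0 := rfl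

lemma adj_scale {n : ℕ} {a b : Pt} (h : (SG n).Adj a b) :
    (SG (n+1)).Adj ((2:ℝ)⁻¹ • a) ((2:ℝ)⁻¹ • b) :=
  adj_succ_iff.2 (Or.inl (by rwa [double_half, double_half]))

lemma adj_tr2 {n : ℕ} {a b : Pt} (h : (SG n).Adj a b) :
    (SG (n+1)).Adj ((2:ℝ)⁻¹ • (u2 + a)) ((2:ℝ)⁻¹ • (u2 + b)) :=
  adj_succ_iff.2 (Or.inr (Or.inl (by rwa [double_half, double_half,
    add_sub_cancel_left, add_sub_cancel_left])))

lemma adj_tr3 {n : ℕ} {a b : Pt} (h : (SG n).Adj a b) :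
    (SG (n+1)).Adj ((2:ℝ)⁻¹ • (u3 + a)) ((2:ℝ)⁻¹ • (u3 + b)) :=
  adj_succ_iff.2 (Or.inr (Or.inr (by rwa [double_half, double_half,
    add_sub_cancel_left, add_sub_cancel_left])))

lemma reach_scale {n : ℕ} {a b : Pt} (h : (SG n).Reachable a b) :
    (SG (n+1)).Reachable ((2:ℝ)⁻¹ • a) ((2:ℝ)⁻¹ • b) := by
  rw [SimpleGraph.reachable_iff_reflTransGen] at h ⊢
  exact Relation.ReflTransGen.lift (fun y : Pt => (2:ℝ)⁻¹ • y) (fun a b h => adj_scale h) _ _ h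

lemma reach_tr2 {n : ℕ} {a b : Pt} (h : (SG n).Reachable a b) :
    (SG (n+1)).Reachable ((2:ℝ)⁻¹ • (u2 + a)) ((2:ℝ)⁻¹ • (u2 + b)) := by
  rw [SimpleGraph.reachable_iff_reflTransGen] at h ⊢
  exact Relation.ReflTransGen.lift (fun y : Pt => (2:ℝ)⁻¹ • (u2 + y)) (fun a b h => adj_tr2 h) _ _ h

lemma reach_tr3 {n : ℕ} {a b : Pt} (h : (SG n).Reachable a b) :
    (SG (n+1)).Reachable ((2:ℝ)⁻¹ • (u3 + a)) ((2:ℝ)⁻¹ • (u3 + b)) := by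
  rw [SimpleGraph.reachable_iff_reflTransGen] at h ⊢
  exact Relation.ReflTransGen.lift (fun y : Pt => (2:ℝ)⁻¹ • (u3 + y)) (fun a b h => adj_tr3 h) _ _ h

lemma reach_u1 : ∀ n : ℕ, ∀ x ∈ V n, (SG n).Reachable x u1 := by
  intro n
  induction n with
  | zero =>
    rintro x (rfl | rfl | rfl)
    · exact SimpleGraph.Reachable.refl _
    · exact SimpleGraph.Adj.reachable ⟨Or.inr (Or.inl rfl), u12.symm⟩
    · exact SimpleGraph.Adj.reachable ⟨Or.inr (Or.inr (Or.inr rfl)), u13.symm⟩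
  | succ n ih =>
    intro x hx
    rcases mem_V_succ.1 hx with h | h | h
    · have r := reach_scale (ih _ h)
      rwa [half_double, u1_zero, smul_zero] at r
    · have r1 := reach_tr2 (ih _ h)
      rw [← rel_pq, half_double, u1_zero, add_zero] at r1
      have r2 := reach_scale (ih u2 (corners_mem_V n).2.1)
      rw [u1_zero, smul_zero] at r2
      exact r1.trans r2
    · have r1 := reach_tr3 (ih _ h)
      rw [← rel_pr, half_double, u1_zero, add_zero] at r1
      have r2 := reach_scale (ih u3 (corners_mem_V n).2.2)
      rw [u1_zero, smul_zero] at r2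
      exact r1.trans r2

end Aux8
section Main

lemma lap_eq (n : ℕ) (f : Pt → ℝ) (x : Pt) :
    lap n f x = 4 * f x - ∑ y ∈ (Nb_finite n x).toFinset, f y := by
  unfold lap
  congr 1
  rw [← finsum_mem_coe_finset, Set.Finite.coe_toFinset]
  rfl

lemma key_le (n : ℕ) (g : Pt → ℝ)
    (hharm : ∀ x ∈ V n, x ∉ corners → lap n g x = 0)
    (h1 : g u1 = 0) (h2 : g u2 = 0) (h3 : g u3 = 0) :
    ∀ x ∈ V n, g x ≤ 0 := by
  by_contra hcon
  push_neg at hcon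
  obtain ⟨x0, hx0, hx0pos⟩ := hcon
  obtain ⟨m, hmV, hmax⟩ := Finset.exists_max_image (V_finite n).toFinset g
    ⟨x0, (V_finite n).mem_toFinset.2 hx0⟩
  have hmax' : ∀ z ∈ V n, g z ≤ g m := fun z hz => hmax z ((V_finite n).mem_toFinset.2 hz)
  have hMpos : 0 < g m := lt_of_lt_of_le hx0pos (hmax' x0 hx0)
  have step : ∀ x ∈ V n, x ∉ corners → g x = g m → ∀ y ∈ Nb n x, g y = g m := by
    intro x hxV hxc hgx y hy
    have hlap := hharm x hxV hxc
    rw [lap_eq] at hlap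
    set N := (Nb_finite n x).toFinset with hN
    have hyN : y ∈ N := (Nb_finite n x).mem_toFinset.2 hy
    have hb : ∀ z ∈ N, g z ≤ g m := fun z hz =>
      hmax' z (Nb_subset_V ((Nb_finite n x).mem_toFinset.1 hz))
    by_contra hne
    have hlt : g y < g m := lt_of_le_of_ne (hb y hyN) hne
    have hsum : ∑ z ∈ N, g z < ∑ z ∈ N, g m := Finset.sum_lt_sum hb ⟨y, hyN, hlt⟩
    rw [Finset.sum_const, nsmul_eq_mul] at hsum
    have hcard : N.card ≤ 4 := by
      rw [hN, ← Set.ncard_eq_toFinset_card _ (Nb_finite n x)]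
      exact (deg_bound n).1 x
    have hcard' : (N.card : ℝ) ≤ 4 := by exact_mod_cast hcard
    nlinarith [hsum, hlap, hgx, hMpos, hcard']
  have prop : ∀ x : Pt, Relation.ReflTransGen (SG n).Adj x u1 → x ∈ V n → g x = g m →
      g u1 = g m := by
    intro x hR
    induction hR using Relation.ReflTransGen.head_induction_on with
    | refl => exact fun _ h => h
    | head hadj htail ih =>
      rename_i a c
      intro haV hga
      by_cases hc : a ∈ corners
      · rcases hc with rfl | rfl | rfl
        · exact hga
        · exfalso; rw [h2] at hga; linarith
        · exfalso; rw [h3] at hga; linarith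
      · have hcN : c ∈ Nb n a := hadj
        exact ih (Nb_subset_V hcN) (step a haV hc hga c hcN)
  have := prop m ((SimpleGraph.reachable_iff_reflTransGen m u1).1 (reach_u1 n m
    ((V_finite n).mem_toFinset.1 hmV))) ((V_finite n).mem_toFinset.1 hmV) rfl
  rw [h1] at this
  linarith

lemma lap_neg (n : ℕ) (f : Pt → ℝ) (x : Pt) :
    lap n (fun z => -f z) x = -lap n f x := by
  rw [lap_eq, lap_eq]
  rw [Finset.sum_neg_distrib]
  ring

end Main
/-- If `f : V_{SG_n} → ℝ` has vanishing Laplacian at every non-corner vertex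
and vanishes at the three corners, then `f = 0` on `V_{SG_n}`. -/
theorem harmonic_zero_boundary_eq_zero (n : ℕ) (f : Pt → ℝ)
    (hharm : ∀ x ∈ V n, x ∉ corners → lap n f x = 0)
    (h1 : f u1 = 0) (h2 : f u2 = 0) (h3 : f u3 = 0) :
    ∀ x ∈ V n, f x = 0 := by
  intro x hx
  have hle := key_le n f hharm h1 h2 h3 x hx
  have hge := key_le n (fun z => -f z)
    (fun y hy hc => by rw [lap_neg, hharm y hy hc, neg_zero])
    (by simp [h1]) (by simp [h2]) (by simp [h3]) x hx
  simp only [neg_nonpos] at hge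
  linarith
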